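/- arXiv:1501.06744 — 9 statements merged into one kernel-verified Lean document; each statement's English description precedes it below -/
import Mathlib

section
/- Let V be a finite-dimensional real normed vector space equipped with a symmetric bilinear form B. Let C₁, C₂ ∈ V satisfy B(C₁,C₁) < 0, B(C₂,C₂) < 0 and x := B(C₁,C₂)² / (B(C₁,C₁)·B(C₂,C₂)) < 1. Let A ∈ V satisfy B(A,C₁) = 0, and define a sequence by A₀ = A, A_{2k+1} = A_{2k} + (B(A_{2k},C₂)/(−B(C₂,C₂)))·C₂, and A_{2k+2} = A_{2k+1} + (B(A_{2k+1},C₁)/(−B(C₁,C₁)))·C₁. Set l₁ = B(A,C₂)/(−B(C₂,C₂)). Then for every k ≥ 0 one has A_{2k+1} − A_{2k} = l₁·x^k·C₂ and A_{2k+2} − A_{2k+1} = l₁·x^k·(B(C₁,C₂)/(−B(C₁,C₁)))·C₁; the sequence (A_m) converges to L := A + (l₁/(1−x))·(C₂ − (B(C₁,C₂)/B(C₁,C₁))·C₁); and the limit satisfies B(L, C₁) = B(L, C₂) = 0. -/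
open Filter

/-- Computational core of Lemma `facetoedge`: alternating maximal formal
J-inflations along two negative classes `C₁, C₂` form a geometric series whose
limit `L = A + (l₁/(1−x))·(C₂ − (B(C₁,C₂)/B(C₁,C₁))·C₁)` is orthogonal to both
`C₁` and `C₂`. -/
theorem facetoedge_computation {V : Type*} [NormedAddCommGroup V]
    [NormedSpace ℝ V] [FiniteDimensional ℝ V]
    (B : V →ₗ[ℝ] V →ₗ[ℝ] ℝ) (hsymm : ∀ x y : V, B x y = B y x)
    (C₁ C₂ : V) (h1 : B C₁ C₁ < 0) (h2 : B C₂ C₂ < 0)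
    (hx : (B C₁ C₂) ^ 2 / (B C₁ C₁ * B C₂ C₂) < 1)
    (A : V) (hA : B A C₁ = 0)
    (Aseq : ℕ → V) (h0 : Aseq 0 = A)
    (hodd : ∀ k : ℕ, Aseq (2 * k + 1) =
      Aseq (2 * k) + (B (Aseq (2 * k)) C₂ / (-(B C₂ C₂))) • C₂)
    (heven : ∀ k : ℕ, Aseq (2 * k + 2) =
      Aseq (2 * k + 1) + (B (Aseq (2 * k + 1)) C₁ / (-(B C₁ C₁))) • C₁) :
    (∀ k : ℕ,
      Aseq (2 * k + 1) - Aseq (2 * k) =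
        ((B A C₂ / (-(B C₂ C₂))) * ((B C₁ C₂) ^ 2 / (B C₁ C₁ * B C₂ C₂)) ^ k) • C₂ ∧
      Aseq (2 * k + 2) - Aseq (2 * k + 1) =
        ((B A C₂ / (-(B C₂ C₂))) * ((B C₁ C₂) ^ 2 / (B C₁ C₁ * B C₂ C₂)) ^ k *
          (B C₁ C₂ / (-(B C₁ C₁)))) • C₁) ∧
    Tendsto Aseq atTop
      (nhds (A + ((B A C₂ / (-(B C₂ C₂))) /
          (1 - (B C₁ C₂) ^ 2 / (B C₁ C₁ * B C₂ C₂))) •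
        (C₂ - (B C₁ C₂ / B C₁ C₁) • C₁))) ∧
    B (A + ((B A C₂ / (-(B C₂ C₂))) /
          (1 - (B C₁ C₂) ^ 2 / (B C₁ C₁ * B C₂ C₂))) •
        (C₂ - (B C₁ C₂ / B C₁ C₁) • C₁)) C₁ = 0 ∧
    B (A + ((B A C₂ / (-(B C₂ C₂))) /
          (1 - (B C₁ C₂) ^ 2 / (B C₁ C₁ * B C₂ C₂))) •
        (C₂ - (B C₁ C₂ / B C₁ C₁) • C₁)) C₂ = 0 := by
  have hb1 : B C₁ C₁ ≠ 0 := ne_of_lt h1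
  have hb2 : B C₂ C₂ ≠ 0 := ne_of_lt h2
  set b1 := B C₁ C₁ with hb1def
  set b2 := B C₂ C₂ with hb2def
  set c := B C₁ C₂ with hcdef
  set x := c ^ 2 / (b1 * b2) with hxdef
  set l := B A C₂ / (-b2) with hldef
  have hbprod : 0 < b1 * b2 := mul_pos_of_neg_of_neg h1 h2
  have hx0 : 0 ≤ x := div_nonneg (sq_nonneg c) hbprod.le
  have h1x : (1 : ℝ) - x ≠ 0 := by intro h; nlinarith
  have hnb1 : -b1 ≠ 0 := neg_ne_zero.mpr hb1
  have hnb2 : -b2 ≠ 0 := neg_ne_zero.mpr hb2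
  have expand : ∀ (X : V) (s : ℝ) (W Y : V), B (X + s • W) Y = B X Y + s * B W Y := by
    intro X s W Y; simp
  -- invariant at even indices
  have inv : ∀ k : ℕ, B (Aseq (2 * k)) C₁ = 0 ∧ B (Aseq (2 * k)) C₂ = B A C₂ * x ^ k := by
    intro k
    induction k with
    | zero => simp [h0, hA]
    | succ k ih =>
      obtain ⟨ih1, ih2⟩ := ih
      have e1 : B (Aseq (2 * k + 1)) C₁ = B A C₂ * x ^ k * (c / (-b2)) := by
        rw [hodd k, expand, ih1, ih2, hsymm C₂ C₁, ← hcdef]; ring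
      have e2 : B (Aseq (2 * k + 1)) C₂ = 0 := by
        rw [hodd k, expand, ih2, ← hb2def]; field_simp [hnb2]; ring
      constructor
      · rw [show 2 * (k + 1) = 2 * k + 2 by ring, heven k, expand, e1, ← hb1def]
        field_simp [hnb1, hnb2]
        ring
      · rw [show 2 * (k + 1) = 2 * k + 2 by ring, heven k, expand, e1, e2, ← hcdef]
        rw [pow_succ]; generalize x ^ k = y
        rw [hxdef]
        field_simp
        ring
  have oddC1 : ∀ k : ℕ, B (Aseq (2 * k + 1)) C₁ = B A C₂ * x ^ k * (c / (-b2)) := by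
    intro k
    rw [hodd k, expand, (inv k).1, (inv k).2, hsymm C₂ C₁, ← hcdef]; ring
  -- difference formulas
  have d1 : ∀ k : ℕ, Aseq (2 * k + 1) - Aseq (2 * k) = (l * x ^ k) • C₂ := by
    intro k
    rw [hodd k, add_sub_cancel_left, (inv k).2, hldef]
    congr 1; ring
  have d2 : ∀ k : ℕ, Aseq (2 * k + 2) - Aseq (2 * k + 1) = (l * x ^ k * (c / (-b1))) • C₁ := by
    intro k
    rw [heven k, add_sub_cancel_left, oddC1 k, hldef]
    congr 1; ring
  -- closed form at even indices
  have closed : ∀ k : ℕ, Aseq (2 * k) =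
      A + (l * ∑ j ∈ Finset.range k, x ^ j) • (C₂ - (c / b1) • C₁) := by
    intro k
    induction k with
    | zero => simp [h0]
    | succ k ih =>
      have step : Aseq (2 * (k + 1)) =
          Aseq (2 * k) + (l * x ^ k) • C₂ + (l * x ^ k * (c / (-b1))) • C₁ := by
        rw [show 2 * (k + 1) = 2 * k + 2 by ring]
        have h1' := eq_add_of_sub_eq (d1 k)
        have h2' := eq_add_of_sub_eq (d2 k)
        rw [h2', h1']
        abel
      rw [step, ih, Finset.sum_range_succ]
      have hcoef : l * x ^ k * (c / (-b1)) = -((l * x ^ k) * (c / b1)) := by ring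
      rw [hcoef]
      module
  -- limits
  have hsum : Tendsto (fun k => ∑ j ∈ Finset.range k, x ^ j) atTop (nhds (1 - x)⁻¹) :=
    (hasSum_geometric_of_lt_one hx0 hx).tendsto_sum_nat
  have hpow : Tendsto (fun k : ℕ => x ^ k) atTop (nhds 0) :=
    tendsto_pow_atTop_nhds_zero_of_lt_one hx0 hx
  set L := A + (l / (1 - x)) • (C₂ - (c / b1) • C₁) with hLdef
  have heventd : Tendsto (fun k => Aseq (2 * k)) atTop (nhds L) := by
    have : Tendsto (fun k => A + (l * ∑ j ∈ Finset.range k, x ^ j) • (C₂ - (c / b1) • C₁))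
        atTop (nhds (A + (l * (1 - x)⁻¹) • (C₂ - (c / b1) • C₁))) :=
      (((tendsto_const_nhds.mul hsum).smul_const _).const_add A)
    rw [hLdef, div_eq_mul_inv]
    exact this.congr fun k => (closed k).symm
  have hoddtd : Tendsto (fun k => Aseq (2 * k + 1)) atTop (nhds L) := by
    have h2' : Tendsto (fun k : ℕ => (l * x ^ k) • C₂) atTop (nhds ((l * 0) • C₂)) :=
      ((tendsto_const_nhds.mul hpow).smul_const C₂)
    have := heventd.add h2'
    simp only [mul_zero, zero_smul, add_zero] at this
    exact this.congr fun k => by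
      rw [eq_add_of_sub_eq (d1 k)]; exact add_comm _ _
  have htd : Tendsto Aseq atTop (nhds L) := by
    rw [Metric.tendsto_atTop] at heventd hoddtd ⊢
    intro ε hε
    obtain ⟨N1, hN1⟩ := heventd ε hε
    obtain ⟨N2, hN2⟩ := hoddtd ε hε
    refine ⟨2 * (max N1 N2) + 1, fun n hn => ?_⟩
    rcases Nat.even_or_odd n with ⟨k, hk⟩ | ⟨k, hk⟩
    · have hkn : n = 2 * k := by omega
      rw [hkn]; exact hN1 k (by omega)
    · have hkn : n = 2 * k + 1 := by omega
      rw [hkn]; exact hN2 k (by omega)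
  -- orthogonality
  have hone : 1 - x = (b1 * b2 - c ^ 2) / (b1 * b2) := by
    rw [hxdef]; field_simp
  have hd : b1 * b2 - c ^ 2 ≠ 0 := by
    have : c ^ 2 < b1 * b2 := (div_lt_one hbprod).mp hx
    intro h; nlinarith
  have hBL1 : B L C₁ = 0 := by
    rw [hLdef, expand]
    simp only [map_sub, map_smul, LinearMap.sub_apply, LinearMap.smul_apply, smul_eq_mul,
      hsymm C₂ C₁, ← hcdef, ← hb1def, hA]
    rw [div_mul_cancel₀ c hb1]
    simp
  have hBL2 : B L C₂ = 0 := by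
    rw [hLdef, expand]
    simp only [map_sub, map_smul, LinearMap.sub_apply, LinearMap.smul_apply, smul_eq_mul,
      ← hcdef, ← hb2def]
    rw [hone, hldef]
    field_simp
    rw [show b2 * b1 - c ^ 2 = b1 * b2 - c ^ 2 by ring]
    field_simp
    ring
  exact ⟨fun k => ⟨d1 k, d2 k⟩, htd, hBL1, hBL2⟩
end

section
/- There do not exist integers k, a, m, b₁, …, b_k with 1 ≤ k ≤ 9, a ≥ 1 and m ≥ 1 such that m + a² = b₁² + ⋯ + b_k² and m + 3a ≤ b₁ + ⋯ + b_k. -/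
open Finset

/-- Numerical content of Proposition `extreme` (1): there are no integers
`k, a, m, b₁, …, b_k` with `1 ≤ k ≤ 9`, `a ≥ 1`, `m ≥ 1` such that
`m + a² = Σ bᵢ²` and `m + 3a ≤ Σ bᵢ`. -/
theorem no_higher_genus_negative_curve :
    ¬ ∃ (k : ℕ) (a m : ℤ) (b : Fin k → ℤ),
      1 ≤ k ∧ k ≤ 9 ∧ 1 ≤ a ∧ 1 ≤ m ∧
      m + a ^ 2 = ∑ i, (b i) ^ 2 ∧ m + 3 * a ≤ ∑ i, b i := by
  rintro ⟨k, a, m, b, hk1, hk9, ha, hm, hQ, hS⟩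
  set S := ∑ i, b i with hSdef
  set Q := ∑ i, (b i) ^ 2 with hQdef
  have hSQ : S ≤ Q := Finset.sum_le_sum (fun i _ => Int.le_self_sq (b i))
  have hCS : S ^ 2 ≤ (k : ℤ) * Q := by
    have := sq_sum_le_card_mul_sum_sq (s := (Finset.univ : Finset (Fin k))) (f := b)
    simpa using this
  have hk9' : (k : ℤ) ≤ 9 := by exact_mod_cast hk9
  have hQ0 : 0 ≤ Q := Finset.sum_nonneg fun i _ => sq_nonneg _
  have h9 : S ^ 2 ≤ 9 * Q := le_trans hCS (by nlinarith)
  -- From S ≤ Q = m + a², and S ≥ m + 3a, we get 3a ≤ a², so a ≥ 3.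
  have ha3 : 3 ≤ a := by nlinarith
  have hSpos : 0 < S := by nlinarith
  nlinarith [sq_nonneg (S - (m + 3 * a))]
end

section
/- Let k, a be integers with 1 ≤ k ≤ 9 and a ≥ 1, and let b₁, …, b_k be integers such that a² ≥ b₁² + ⋯ + b_k² and b₁ + ⋯ + b_k ≥ 3a. Then k = 9 and there exists an integer m ≥ 1 with a = 3m and bᵢ = m for every i. -/
open Finset

/-- Numerical content of Lemma `dim0good`: if `1 ≤ k ≤ 9`, `a ≥ 1`,
`a² ≥ Σ bᵢ²` and `Σ bᵢ ≥ 3a`, then `k = 9` and `(a; b₁, …, b₉) = (3m; m, …, m)`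
for some integer `m ≥ 1`. -/
theorem dim0good (k : ℕ) (hk1 : 1 ≤ k) (hk9 : k ≤ 9) (a : ℤ) (ha : 1 ≤ a)
    (b : Fin k → ℤ)
    (hsq : ∑ i, (b i) ^ 2 ≤ a ^ 2)
    (hsum : 3 * a ≤ ∑ i, b i) :
    k = 9 ∧ ∃ m : ℤ, 1 ≤ m ∧ a = 3 * m ∧ ∀ i, b i = m := by
  set s := ∑ i, b i with hs
  set Q := ∑ i, (b i) ^ 2 with hQ
  have key : ∑ i, ∑ j, (b i - b j) ^ 2 = 2 * (k : ℤ) * Q - 2 * s ^ 2 := by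
    have : ∀ i, ∑ j, (b i - b j) ^ 2 = (k : ℤ) * (b i) ^ 2 - 2 * b i * s + Q := by
      intro i
      have hpt : ∀ j, (b i - b j) ^ 2 = (b i) ^ 2 - 2 * b i * b j + (b j) ^ 2 :=
        fun j => by ring
      simp_rw [hpt, Finset.sum_add_distrib, Finset.sum_sub_distrib, Finset.sum_const,
        Finset.card_univ, Fintype.card_fin, ← Finset.mul_sum, nsmul_eq_mul]
      rfl
    simp_rw [this]
    rw [Finset.sum_add_distrib, Finset.sum_sub_distrib, ← Finset.mul_sum, ← hQ,
      Finset.sum_const, Finset.card_univ, Fintype.card_fin]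
    have : ∑ i, 2 * b i * s = 2 * s * s := by
      rw [← Finset.sum_mul, ← Finset.mul_sum, ← hs]
    rw [this]
    push_cast
    ring
  have hnn : (0 : ℤ) ≤ ∑ i, ∑ j, (b i - b j) ^ 2 :=
    Finset.sum_nonneg fun i _ => Finset.sum_nonneg fun j _ => sq_nonneg _
  have hCS : s ^ 2 ≤ (k : ℤ) * Q := by nlinarith [key, hnn]
  have ha2 : (1 : ℤ) ≤ a ^ 2 := by nlinarith
  have hs3 : 9 * a ^ 2 ≤ s ^ 2 := by nlinarith
  have hkQ : (k : ℤ) * Q ≤ (k : ℤ) * a ^ 2 := by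
    have : (0 : ℤ) ≤ (k : ℤ) := by positivity
    nlinarith
  have hk9' : (k : ℤ) * a ^ 2 ≤ 9 * a ^ 2 := by
    have : (k : ℤ) ≤ 9 := by exact_mod_cast hk9
    nlinarith
  -- all inequalities are equalities
  have hk : k = 9 := by
    have h9 : (9 : ℤ) * a ^ 2 ≤ (k : ℤ) * a ^ 2 := by linarith
    have : (9 : ℤ) ≤ (k : ℤ) := by nlinarith
    omega
  subst hk
  have hQeq : Q = a ^ 2 := by nlinarith
  have hseq : s ^ 2 = 9 * a ^ 2 := by nlinarith
  have hzero : ∑ i, ∑ j, (b i - b j) ^ 2 = 0 := by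
    rw [key, hQeq]
    push_cast
    nlinarith
  have hall : ∀ i j : Fin 9, b i = b j := by
    intro i j
    have h1 := (Finset.sum_eq_zero_iff_of_nonneg
      (fun i _ => Finset.sum_nonneg fun j _ => sq_nonneg (b i - b j))).mp hzero i (Finset.mem_univ i)
    have h2 := (Finset.sum_eq_zero_iff_of_nonneg
      (fun j _ => sq_nonneg (b i - b j))).mp h1 j (Finset.mem_univ j)
    have := pow_eq_zero_iff (n := 2) (by norm_num) |>.mp h2
    linarith [sub_eq_zero.mp this]
  have hsval : s = 9 * b 0 := by
    rw [hs, Finset.sum_congr rfl (fun i _ => hall i 0)]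
    simp [Finset.sum_const]
  have hm1 : 1 ≤ b 0 := by nlinarith
  have ha3 : a = 3 * b 0 := by
    have hzero2 : (a - 3 * b 0) * (a + 3 * b 0) = 0 := by nlinarith
    rcases mul_eq_zero.mp hzero2 with h | h
    · linarith
    · linarith
  exact ⟨rfl, b 0, hm1, ha3, fun i => hall i 0⟩
end

section
/- Let k ≤ 8 and let a ≥ 1 and b₁, …, b_k ≥ 0 be integers satisfying a² < b₁² + ⋯ + b_k² and (a−1)(a−2) = Σᵢ bᵢ(bᵢ−1). Then, up to a permutation of (b₁, …, b_k), one of the following holds: (1) a = 1 and every bᵢ ∈ {0,1}; (2) a = 2 and every bᵢ ∈ {0,1}; (3) a = 3, exactly one bᵢ equals 2 and all other bᵢ lie in {0,1}; (4) a = 4, exactly three bᵢ equal 2 and all other bᵢ lie in {0,1}; (5) a = 5, exactly two bᵢ equal 1 and every other nonzero bᵢ equals 2; (6) a = 6, exactly one bᵢ equals 3 and every other nonzero bᵢ equals 2. -/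
open Finset

private lemma count_zero {k : ℕ} {b : Fin k → ℤ} {j : ℤ}
    (h : (Finset.univ.filter (fun i => b i = j)).card = 0) (i : Fin k) : b i ≠ j := by
  intro hj
  rw [Finset.card_eq_zero, Finset.filter_eq_empty_iff] at h
  exact h (Finset.mem_univ i) hj

private lemma fiber_sum {k : ℕ} (b : Fin k → ℤ) (hb : ∀ i, b i ∈ ({0,1,2,3,4,5,6} : Finset ℤ))
    (F : ℤ → ℤ) :
    ∑ i, F (b i) = ∑ j ∈ ({0,1,2,3,4,5,6} : Finset ℤ),
      ((Finset.univ.filter (fun i => b i = j)).card : ℤ) * F j := by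
  rw [← Finset.sum_fiberwise_of_maps_to (fun i _ => hb i) (fun i => F (b i))]
  refine Finset.sum_congr rfl fun j _ => ?_
  rw [Finset.sum_congr rfl (fun i hi => by
    rw [(Finset.mem_filter.mp hi).2]), Finset.sum_const, nsmul_eq_mul]

set_option maxHeartbeats 2000000 in
/-- Proposition `a>0` in arithmetic form: classification of the solutions of
`a² < Σ bᵢ²`, `(a−1)(a−2) = Σ bᵢ(bᵢ−1)` with `k ≤ 8`, `a ≥ 1`, `bᵢ ≥ 0`. -/
theorem negative_curve_classification (k : ℕ) (hk : k ≤ 8) (a : ℤ) (ha : 1 ≤ a)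
    (b : Fin k → ℤ) (hb : ∀ i, 0 ≤ b i)
    (hneg : a ^ 2 < ∑ i, (b i) ^ 2)
    (hadj : (a - 1) * (a - 2) = ∑ i, b i * (b i - 1)) :
    (a = 1 ∧ ∀ i, b i = 0 ∨ b i = 1) ∨
    (a = 2 ∧ ∀ i, b i = 0 ∨ b i = 1) ∨
    (a = 3 ∧ (Finset.univ.filter (fun i => b i = 2)).card = 1 ∧
      ∀ i, b i = 0 ∨ b i = 1 ∨ b i = 2) ∨
    (a = 4 ∧ (Finset.univ.filter (fun i => b i = 2)).card = 3 ∧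
      ∀ i, b i = 0 ∨ b i = 1 ∨ b i = 2) ∨
    (a = 5 ∧ (Finset.univ.filter (fun i => b i = 1)).card = 2 ∧
      ∀ i, b i = 0 ∨ b i = 1 ∨ b i = 2) ∨
    (a = 6 ∧ (Finset.univ.filter (fun i => b i = 3)).card = 1 ∧
      ∀ i, b i = 0 ∨ b i = 2 ∨ b i = 3) := by
  -- each term b i * (b i - 1) is nonnegative
  have hterm0 : ∀ i, 0 ≤ b i * (b i - 1) := by
    intro i
    rcases le_or_gt 1 (b i) with h | h
    · nlinarith
    · have : b i = 0 := le_antisymm (by omega) (hb i)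
      simp [this]
  -- each term is at most the total sum
  have hterm : ∀ i, b i * (b i - 1) ≤ (a - 1) * (a - 2) := by
    intro i
    rw [hadj]
    exact Finset.single_le_sum (fun j _ => hterm0 j) (Finset.mem_univ i)
  -- sum relations
  have hsum : ∑ i, b i * (b i - 1) = (∑ i, (b i) ^ 2) - ∑ i, b i := by
    rw [← Finset.sum_sub_distrib]
    exact Finset.sum_congr rfl fun i _ => by ring
  have hS1 : 3 * a - 2 < ∑ i, b i := by
    have := hadj
    rw [hsum] at this
    nlinarith
  have hS1nn : 0 ≤ ∑ i, b i := Finset.sum_nonneg fun i _ => hb i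
  -- Cauchy-Schwarz
  have hCS : (∑ i, b i) ^ 2 ≤ 8 * ∑ i, (b i) ^ 2 := by
    have h1 : (∑ i, b i) ^ 2 ≤ (Finset.univ : Finset (Fin k)).card * ∑ i, (b i) ^ 2 :=
      sq_sum_le_card_mul_sum_sq
    have h2 : ((Finset.univ : Finset (Fin k)).card : ℤ) ≤ 8 := by
      simp [Finset.card_univ]; exact_mod_cast hk
    have h3 : 0 ≤ ∑ i, (b i) ^ 2 := Finset.sum_nonneg fun i _ => sq_nonneg _
    calc (∑ i, b i) ^ 2 ≤ ((Finset.univ : Finset (Fin k)).card : ℤ) * ∑ i, (b i) ^ 2 := h1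
      _ ≤ 8 * ∑ i, (b i) ^ 2 := by exact mul_le_mul_of_nonneg_right h2 h3
  -- bound a ≤ 7
  have ha7 : a ≤ 7 := by
    by_contra h
    push_neg at h
    have hS2 : ∑ i, (b i) ^ 2 = (∑ i, b i) + (a - 1) * (a - 2) := by
      rw [hadj, hsum]; ring
    rw [hS2] at hCS
    nlinarith [hS1, hS1nn, sq_nonneg (∑ i, b i - 3 * a + 1)]
  -- bound b i ≤ 6
  have hb6 : ∀ i, b i ≤ 6 := by
    intro i
    by_contra h
    push_neg at h
    have := hterm i
    nlinarith
  have hbmem : ∀ i, b i ∈ ({0,1,2,3,4,5,6} : Finset ℤ) := by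
    intro i
    have h1 := hb i
    have h2 := hb6 i
    simp only [Finset.mem_insert, Finset.mem_singleton]
    omega
  -- counts
  set N : ℤ → ℕ := fun j => (Finset.univ.filter (fun i => b i = j)).card with hN
  have hcard : ∑ j ∈ ({0,1,2,3,4,5,6} : Finset ℤ), ((N j : ℤ) * 1) = (k : ℤ) := by
    have := fiber_sum b hbmem (fun _ => 1)
    exact this.symm.trans (by simp)
  have hsq : ∑ i, (b i) ^ 2 = ∑ j ∈ ({0,1,2,3,4,5,6} : Finset ℤ), ((N j : ℤ) * j ^ 2) :=
    fiber_sum b hbmem (fun x => x ^ 2)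
  have hmul : ∑ i, b i * (b i - 1) =
      ∑ j ∈ ({0,1,2,3,4,5,6} : Finset ℤ), ((N j : ℤ) * (j * (j - 1))) :=
    fiber_sum b hbmem (fun x => x * (x - 1))
  have e1 : (N 0 : ℤ) + N 1 + N 2 + N 3 + N 4 + N 5 + N 6 = k := by
    rw [← hcard]; norm_num [Finset.sum_insert, Finset.mem_insert]; ring
  have e2 : a ^ 2 < (N 1 : ℤ) + 4 * N 2 + 9 * N 3 + 16 * N 4 + 25 * N 5 + 36 * N 6 := by
    calc a ^ 2 < ∑ i, (b i) ^ 2 := hneg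
      _ = _ := by rw [hsq]; norm_num [Finset.sum_insert, Finset.mem_insert]; ring
  have e3 : (a - 1) * (a - 2) =
      2 * (N 2 : ℤ) + 6 * N 3 + 12 * N 4 + 20 * N 5 + 30 * N 6 := by
    rw [hadj, hmul]; norm_num [Finset.sum_insert, Finset.mem_insert]; ring
  have hk8 : (k : ℤ) ≤ 8 := by exact_mod_cast hk
  interval_cases a
  · -- a = 1
    refine Or.inl ⟨rfl, fun i => ?_⟩
    have h2 : N 2 = 0 := by omega
    have h3 : N 3 = 0 := by omega
    have h4 : N 4 = 0 := by omega
    have h5 : N 5 = 0 := by omega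
    have h6 : N 6 = 0 := by omega
    have := count_zero h2 i; have := count_zero h3 i; have := count_zero h4 i
    have := count_zero h5 i; have := count_zero h6 i
    have := hb i; have := hb6 i; omega
  · -- a = 2
    refine Or.inr (Or.inl ⟨rfl, fun i => ?_⟩)
    have h2 : N 2 = 0 := by omega
    have h3 : N 3 = 0 := by omega
    have h4 : N 4 = 0 := by omega
    have h5 : N 5 = 0 := by omega
    have h6 : N 6 = 0 := by omega
    have := count_zero h2 i; have := count_zero h3 i; have := count_zero h4 i
    have := count_zero h5 i; have := count_zero h6 i
    have := hb i; have := hb6 i; omega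
  · -- a = 3
    have h2 : N 2 = 1 := by omega
    have h3 : N 3 = 0 := by omega
    have h4 : N 4 = 0 := by omega
    have h5 : N 5 = 0 := by omega
    have h6 : N 6 = 0 := by omega
    refine Or.inr (Or.inr (Or.inl ⟨rfl, h2, fun i => ?_⟩))
    have := count_zero h3 i; have := count_zero h4 i
    have := count_zero h5 i; have := count_zero h6 i
    have := hb i; have := hb6 i; omega
  · -- a = 4
    have h2 : N 2 = 3 := by omega
    have h3 : N 3 = 0 := by omega
    have h4 : N 4 = 0 := by omega
    have h5 : N 5 = 0 := by omega
    have h6 : N 6 = 0 := by omega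
    refine Or.inr (Or.inr (Or.inr (Or.inl ⟨rfl, h2, fun i => ?_⟩)))
    have := count_zero h3 i; have := count_zero h4 i
    have := count_zero h5 i; have := count_zero h6 i
    have := hb i; have := hb6 i; omega
  · -- a = 5
    have h1 : N 1 = 2 := by omega
    have h3 : N 3 = 0 := by omega
    have h4 : N 4 = 0 := by omega
    have h5 : N 5 = 0 := by omega
    have h6 : N 6 = 0 := by omega
    refine Or.inr (Or.inr (Or.inr (Or.inr (Or.inl ⟨rfl, h1, fun i => ?_⟩))))
    have := count_zero h3 i; have := count_zero h4 i
    have := count_zero h5 i; have := count_zero h6 i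
    have := hb i; have := hb6 i; omega
  · -- a = 6
    have h3 : N 3 = 1 := by omega
    have h1 : N 1 = 0 := by omega
    have h4 : N 4 = 0 := by omega
    have h5 : N 5 = 0 := by omega
    have h6 : N 6 = 0 := by omega
    refine Or.inr (Or.inr (Or.inr (Or.inr (Or.inr ⟨rfl, h3, fun i => ?_⟩))))
    have := count_zero h1 i; have := count_zero h4 i
    have := count_zero h5 i; have := count_zero h6 i
    have := hb i; have := hb6 i; omega
  · -- a = 7 : impossible
    exfalso
    omega
end

section
/- Let a, b₁, …, b₉ be integers with b₁ + ⋯ + b₉ = 3a and b₁² + ⋯ + b₉² = a² + 2. Then, up to a permutation of (b₁, …, b₉), there is an integer t such that (a; b₁, …, b₉) equals one of: (3t; t+1, t−1, t, t, t, t, t, t, t); (3t+2; t, t, t, t+1, t+1, t+1, t+1, t+1, t+1); or (3t−2; t, t, t, t−1, t−1, t−1, t−1, t−1, t−1). -/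
open Finset

theorem count_ofFn_eq {n : ℕ} (f : Fin n → ℤ) (z : ℤ) :
    (List.ofFn f).count z = (univ.filter fun i => f i = z).card := by
  calc (List.ofFn f).count z = Multiset.count z (Multiset.ofList (List.ofFn f)) :=
        (Multiset.coe_count _ _).symm
    _ = Multiset.count z (Finset.univ.val.map f) := by rw [Fin.univ_val_map]
    _ = Multiset.card (Multiset.filter (fun i => z = f i) Finset.univ.val) :=
        Multiset.count_map _ _ _
    _ = (univ.filter fun i => f i = z).card := by
        rw [Finset.card, Finset.filter_val]
        congr 1
        exact Multiset.filter_congr (fun i _ => by constructor <;> exact Eq.symm)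

theorem exists_perm_comp {n : ℕ} (v w : Fin n → ℤ)
    (h : ∀ z, (univ.filter fun i => v i = z).card = (univ.filter fun i => w i = z).card) :
    ∃ σ : Equiv.Perm (Fin n), v ∘ σ = w := by
  have hperm : (List.ofFn v).Perm (List.ofFn w) :=
    List.perm_iff_count.2 fun z => by rw [count_ofFn_eq, count_ofFn_eq, h]
  have hvw : v ∘ Tuple.sort v = w ∘ Tuple.sort w := by
    apply List.ofFn_injective
    refine (fun hp h1 h2 => List.Perm.eq_of_sortedLE h1 h2 hp) ?_ ?_ ?_
    · exact ((Tuple.sort v).ofFn_comp_perm v).trans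
        (hperm.trans ((Tuple.sort w).ofFn_comp_perm w).symm)
    · exact (Tuple.monotone_sort v).sortedLE_ofFn
    · exact (Tuple.monotone_sort w).sortedLE_ofFn
  refine ⟨(Tuple.sort w).symm.trans (Tuple.sort v), ?_⟩
  funext i
  have := congrFun hvw ((Tuple.sort w).symm i)
  simpa using this

theorem perm_two (b : Fin 9 → ℤ) (s u : ℤ) (hne : s ≠ u)
    (hall : ∀ i, b i = s ∨ b i = u)
    (hcard : (univ.filter fun i => b i = s).card = 3) :
    ∃ σ : Equiv.Perm (Fin 9), b ∘ σ = ![s, s, s, u, u, u, u, u, u] := by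
  have hcompl : (univ.filter fun i => b i = u) = (univ.filter fun i => b i = s)ᶜ := by
    ext i
    simp only [Finset.mem_filter, Finset.mem_compl, Finset.mem_univ, true_and]
    rcases hall i with h | h <;> simp [h, hne, Ne.symm hne]
  have hcardu : (univ.filter fun i => b i = u).card = 6 := by
    rw [hcompl, Finset.card_compl, hcard]
    simp
  apply exists_perm_comp
  intro z
  by_cases hz1 : z = s
  · subst hz1
    rw [hcard, Finset.card_filter]
    simp only [Fin.sum_univ_succ, Fin.sum_univ_zero, Matrix.cons_val_zero, Matrix.cons_val_succ]
    simp [Ne.symm hne]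
  by_cases hz2 : z = u
  · subst hz2
    rw [hcardu, Finset.card_filter]
    simp only [Fin.sum_univ_succ, Fin.sum_univ_zero, Matrix.cons_val_zero, Matrix.cons_val_succ]
    simp [hne]
  · have h1 : (univ.filter fun i => b i = z) = ∅ :=
      Finset.filter_eq_empty_iff.2 fun i _ => by
        rcases hall i with h | h <;> rw [h] <;> [exact fun hh => hz1 hh.symm;
          exact fun hh => hz2 hh.symm]
    have h2 : (univ.filter fun i => (![s, s, s, u, u, u, u, u, u] : Fin 9 → ℤ) i = z) = ∅ :=
      Finset.filter_eq_empty_iff.2 fun i _ => by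
        fin_cases i <;> simp <;> [exact fun hh => hz1 hh.symm; exact fun hh => hz1 hh.symm;
          exact fun hh => hz1 hh.symm; exact fun hh => hz2 hh.symm; exact fun hh => hz2 hh.symm;
          exact fun hh => hz2 hh.symm; exact fun hh => hz2 hh.symm; exact fun hh => hz2 hh.symm;
          exact fun hh => hz2 hh.symm]
    rw [h1, h2]

theorem perm_three (b : Fin 9 → ℤ) (t : ℤ)
    (h1 : (univ.filter fun i => b i = t + 1).card = 1)
    (h2 : (univ.filter fun i => b i = t - 1).card = 1)
    (hall : ∀ i, b i = t + 1 ∨ b i = t - 1 ∨ b i = t) :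
    ∃ σ : Equiv.Perm (Fin 9), b ∘ σ = ![t + 1, t - 1, t, t, t, t, t, t, t] := by
  have hcardt : (univ.filter fun i => b i = t).card = 7 := by
    have key : ∀ i : Fin 9, (1 : ℤ) = (if b i = t + 1 then (1 : ℤ) else 0)
        + (if b i = t - 1 then (1 : ℤ) else 0) + (if b i = t then (1 : ℤ) else 0) := by
      intro i
      rcases hall i with h | h | h <;> rw [h] <;> split_ifs <;> omega
    have h9 : (9 : ℤ) = ((univ.filter fun i => b i = t + 1).card : ℤ)
        + ((univ.filter fun i => b i = t - 1).card : ℤ)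
        + ((univ.filter fun i => b i = t).card : ℤ) := by
      rw [← Finset.sum_boole, ← Finset.sum_boole, ← Finset.sum_boole,
        ← Finset.sum_add_distrib, ← Finset.sum_add_distrib]
      calc (9 : ℤ) = ∑ _i : Fin 9, (1 : ℤ) := by simp
        _ = _ := Finset.sum_congr rfl fun i _ => key i
    omega
  apply exists_perm_comp
  intro z
  by_cases hz1 : z = t + 1
  · subst hz1
    rw [h1, Finset.card_filter]
    simp only [Fin.sum_univ_succ, Fin.sum_univ_zero, Matrix.cons_val_zero, Matrix.cons_val_succ]
    have e1 : ¬(t - 1 = t + 1) := by omega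
    have e2 : ¬(t = t + 1) := by omega
    simp [e1, e2]
  by_cases hz2 : z = t - 1
  · subst hz2
    rw [h2, Finset.card_filter]
    simp only [Fin.sum_univ_succ, Fin.sum_univ_zero, Matrix.cons_val_zero, Matrix.cons_val_succ]
    have e1 : ¬(t + 1 = t - 1) := by omega
    have e2 : ¬(t = t - 1) := by omega
    simp [e1, e2]
  by_cases hz3 : z = t
  · rw [hz3]
    rw [hcardt, Finset.card_filter]
    simp only [Fin.sum_univ_succ, Fin.sum_univ_zero, Matrix.cons_val_zero, Matrix.cons_val_succ]
    have e1 : ¬(t + 1 = t) := by omega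
    have e2 : ¬(t - 1 = t) := by omega
    simp [e1, e2]
  · have ha : (univ.filter fun i => b i = z) = ∅ :=
      Finset.filter_eq_empty_iff.2 fun i _ => by
        rcases hall i with h | h | h <;> rw [h] <;>
          [exact fun hh => hz1 hh.symm; exact fun hh => hz2 hh.symm; exact fun hh => hz3 hh.symm]
    have hb : (univ.filter fun i =>
        (![t + 1, t - 1, t, t, t, t, t, t, t] : Fin 9 → ℤ) i = z) = ∅ :=
      Finset.filter_eq_empty_iff.2 fun i _ => by
        fin_cases i <;> simp <;>
          [exact fun hh => hz1 hh.symm; exact fun hh => hz2 hh.symm; exact fun hh => hz3 hh.symm;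
           exact fun hh => hz3 hh.symm; exact fun hh => hz3 hh.symm; exact fun hh => hz3 hh.symm;
           exact fun hh => hz3 hh.symm; exact fun hh => hz3 hh.symm; exact fun hh => hz3 hh.symm]
    rw [ha, hb]

theorem counts_of (b : Fin 9 → ℤ) (c s q : ℤ)
    (h1 : ∑ i, (b i - c) = s) (h2 : ∑ i, (b i - c) ^ 2 = q) (hq : q ≤ 3) :
    (∀ i, b i = c + 1 ∨ b i = c - 1 ∨ b i = c) ∧
    ((univ.filter fun i => b i = c + 1).card : ℤ)
      - ((univ.filter fun i => b i = c - 1).card : ℤ) = s ∧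
    ((univ.filter fun i => b i = c + 1).card : ℤ)
      + ((univ.filter fun i => b i = c - 1).card : ℤ) = q := by
  have hb : ∀ i, (b i - c) ^ 2 ≤ q := fun i =>
    h2 ▸ Finset.single_le_sum (fun j _ => sq_nonneg (b j - c)) (mem_univ i)
  have hall : ∀ i, b i = c + 1 ∨ b i = c - 1 ∨ b i = c := by
    intro i
    have h := (hb i).trans hq
    have hu : 4 * (b i - c) ≤ 7 := by nlinarith [sq_nonneg (b i - c - 2)]
    have hl : -7 ≤ 4 * (b i - c) := by nlinarith [sq_nonneg (b i - c + 2)]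
    omega
  refine ⟨hall, ?_, ?_⟩
  · rw [← Finset.sum_boole, ← Finset.sum_boole, ← Finset.sum_sub_distrib, ← h1]
    refine Finset.sum_congr rfl fun i _ => ?_
    rcases hall i with h | h | h <;> rw [h] <;> split_ifs <;> omega
  · rw [← Finset.sum_boole, ← Finset.sum_boole, ← Finset.sum_add_distrib, ← h2]
    refine Finset.sum_congr rfl fun i _ => ?_
    rcases hall i with h | h | h <;> rw [h] <;> split_ifs <;> ring_nf <;> omega

/-- Diophantine classification from the proof of Proposition `a>0`:
if `Σ bᵢ = 3a` and `Σ bᵢ² = a² + 2` for nine integers `b₁, …, b₉`, then up to a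
permutation `(a; b)` is `(3t; t+1, t−1, t, …, t)` or
`(3t±2; t, t, t, t±1, …, t±1)` for some integer `t`. -/
theorem nine_squares_classification (a : ℤ) (b : Fin 9 → ℤ)
    (hsum : ∑ i, b i = 3 * a)
    (hsq : ∑ i, (b i) ^ 2 = a ^ 2 + 2) :
    ∃ (σ : Equiv.Perm (Fin 9)) (t : ℤ),
      (a = 3 * t ∧ b ∘ σ = ![t + 1, t - 1, t, t, t, t, t, t, t]) ∨
      (a = 3 * t + 2 ∧ b ∘ σ = ![t, t, t, t + 1, t + 1, t + 1, t + 1, t + 1, t + 1]) ∨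
      (a = 3 * t - 2 ∧ b ∘ σ = ![t, t, t, t - 1, t - 1, t - 1, t - 1, t - 1, t - 1]) := by
  have S1 : ∀ c : ℤ, ∑ i, (b i - c) = 3 * a - 9 * c := by
    intro c
    rw [Finset.sum_sub_distrib, hsum, Finset.sum_const, Finset.card_univ]
    simp
  have S2 : ∀ c : ℤ, ∑ i, (b i - c) ^ 2 = a ^ 2 + 2 - 6 * c * a + 9 * c ^ 2 := by
    intro c
    calc ∑ i, (b i - c) ^ 2 = ∑ i, (b i ^ 2 - 2 * c * b i + c ^ 2) :=
          Finset.sum_congr rfl fun i _ => by ring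
      _ = (∑ i, b i ^ 2) - 2 * c * (∑ i, b i) + (9 : ℤ) * c ^ 2 := by
          rw [Finset.sum_add_distrib, Finset.sum_sub_distrib, ← Finset.mul_sum,
            Finset.sum_const, Finset.card_univ]
          simp
      _ = _ := by rw [hsq, hsum]; ring
  obtain ⟨t, ht⟩ : ∃ t : ℤ, a = 3 * t ∨ a = 3 * t + 1 ∨ a = 3 * t + 2 := ⟨a / 3, by omega⟩
  rcases ht with ha | ha | ha
  · -- a = 3t : pattern (t+1, t-1, t, …, t)
    obtain ⟨hall, e1, e2⟩ := counts_of b t 0 2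
      (by rw [S1, ha]; ring) (by rw [S2, ha]; ring) (by norm_num)
    have c1 : (univ.filter fun i => b i = t + 1).card = 1 := by omega
    have c2 : (univ.filter fun i => b i = t - 1).card = 1 := by omega
    obtain ⟨σ, hσ⟩ := perm_three b t c1 c2 hall
    exact ⟨σ, t, Or.inl ⟨ha, hσ⟩⟩
  · -- a = 3t+1 = 3(t+1)-2 : pattern (t+1,t+1,t+1,t,…,t)
    obtain ⟨hall, e1, e2⟩ := counts_of b t 3 3
      (by rw [S1, ha]; ring) (by rw [S2, ha]; ring) (by norm_num)
    have c2 : (univ.filter fun i => b i = t - 1).card = 0 := by omega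
    have c1 : (univ.filter fun i => b i = t + 1).card = 3 := by omega
    have hemp : (univ.filter fun i => b i = t - 1) = ∅ := Finset.card_eq_zero.1 c2
    have hall2 : ∀ i, b i = t + 1 ∨ b i = t := by
      intro i
      rcases hall i with h | h | h
      · exact Or.inl h
      · exfalso
        exact (Finset.eq_empty_iff_forall_notMem.1 hemp i)
          (Finset.mem_filter.2 ⟨mem_univ i, h⟩)
      · exact Or.inr h
    obtain ⟨σ, hσ⟩ := perm_two b (t + 1) t (by omega) hall2 c1
    refine ⟨σ, t + 1, Or.inr (Or.inr ⟨by ring_nf; omega, ?_⟩)⟩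
    have e : t + 1 - 1 = t := by ring
    rw [e]
    exact hσ
  · -- a = 3t+2 : pattern (t,t,t,t+1,…,t+1)
    obtain ⟨hall, e1, e2⟩ := counts_of b (t + 1) (-3) 3
      (by rw [S1, ha]; ring) (by rw [S2, ha]; ring) (by norm_num)
    have c1 : (univ.filter fun i => b i = t + 1 + 1).card = 0 := by omega
    have c2 : (univ.filter fun i => b i = t + 1 - 1).card = 3 := by omega
    have hemp : (univ.filter fun i => b i = t + 1 + 1) = ∅ := Finset.card_eq_zero.1 c1
    have hall2 : ∀ i, b i = t ∨ b i = t + 1 := by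
      intro i
      rcases hall i with h | h | h
      · exfalso
        exact (Finset.eq_empty_iff_forall_notMem.1 hemp i)
          (Finset.mem_filter.2 ⟨mem_univ i, h⟩)
      · exact Or.inl (by omega)
      · exact Or.inr h
    simp only [add_sub_cancel_right] at c2
    obtain ⟨σ, hσ⟩ := perm_two b t (t + 1) (by omega) hall2 c2
    exact ⟨σ, t, Or.inr (Or.inl ⟨ha, hσ⟩)⟩
end

section
/- Let k be an integer with 1 ≤ k ≤ 8, let a ≥ 1 and b₁, …, b_k be integers, and set c = a² − (b₁² + ⋯ + b_k²). Suppose b₁ + ⋯ + b_k = 3a − c. Then c ≥ 9 − k, and c = 9 − k holds if and only if a = 3 and bᵢ = 1 for every i. -/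
open Finset

/-- Lemma `small+` (2) in arithmetic form: if `1 ≤ k ≤ 8`, `a ≥ 1`,
`c = a² − Σ bᵢ²` and `Σ bᵢ = 3a − c`, then `c ≥ 9 − k`, with equality iff
`a = 3` and every `bᵢ = 1`. -/
theorem genus_one_square_bound (k : ℕ) (hk1 : 1 ≤ k) (hk8 : k ≤ 8)
    (a : ℤ) (ha : 1 ≤ a) (b : Fin k → ℤ)
    (hadj : ∑ i, b i = 3 * a - (a ^ 2 - ∑ i, (b i) ^ 2)) :
    (9 : ℤ) - k ≤ a ^ 2 - ∑ i, (b i) ^ 2 ∧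
    (a ^ 2 - ∑ i, (b i) ^ 2 = (9 : ℤ) - k ↔ a = 3 ∧ ∀ i, b i = 1) := by
  set S : ℤ := ∑ i, b i with hSdef
  set Q : ℤ := ∑ i, (b i) ^ 2 with hQdef
  have hk8' : (k : ℤ) ≤ 8 := by exact_mod_cast hk8
  have hk1' : (1 : ℤ) ≤ k := by exact_mod_cast hk1
  -- Q - S ≥ 0
  have hQS : S ≤ Q := Finset.sum_le_sum fun i _ => Int.le_self_sq (b i)
  have hS : Q - S = a ^ 2 - 3 * a := by linarith
  -- a ≥ 3
  have ha3 : 3 ≤ a := by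
    by_contra h
    push_neg at h
    have h2 : a ≤ 2 := by omega
    nlinarith [mul_le_mul_of_nonneg_right h2 (by linarith : (0:ℤ) ≤ a)]
  -- Cauchy-Schwarz on (b i - 1)
  have hC : (∑ i, (b i - 1)) ^ 2 ≤ (k : ℤ) * ∑ i, (b i - 1) ^ 2 := by
    have := sq_sum_le_card_mul_sum_sq (s := (univ : Finset (Fin k))) (f := fun i => b i - 1)
    simpa using this
  have hsum1 : (∑ i, (b i - 1)) = S - k := by
    rw [Finset.sum_sub_distrib]
    simp [hSdef]
  have hsum2 : (∑ i, (b i - 1) ^ 2) = Q - 2 * S + k := by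
    have : ∀ i : Fin k, (b i - 1) ^ 2 = (b i) ^ 2 - 2 * b i + 1 := fun i => by ring
    rw [Finset.sum_congr rfl fun i _ => this i, Finset.sum_add_distrib,
      Finset.sum_sub_distrib, ← Finset.mul_sum]
    simp [hSdef, hQdef]
  rw [hsum1, hsum2] at hC
  have hmain : (9 : ℤ) - k ≤ a ^ 2 - Q := by
    by_contra h
    push_neg at h
    have hd : a ^ 2 - Q ≤ 8 - k := by omega
    -- d = (a^2 - Q) - 9 + k ≤ -1, u = a - 3 ≥ 0
    nlinarith [mul_nonneg (by linarith : (0:ℤ) ≤ a - 3)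
        (by linarith : (0:ℤ) ≤ 9 - k - (a ^ 2 - Q)),
      mul_nonneg (by linarith : (0:ℤ) ≤ 9 - k - (a ^ 2 - Q))
        (by linarith : (0:ℤ) ≤ (k : ℤ) + 9 - k - (a ^ 2 - Q)),
      sq_nonneg (a - 3)]
  refine ⟨hmain, ?_, ?_⟩
  · intro heq
    have hu : (a - 3) ^ 2 ≤ 0 := by nlinarith
    have ha' : a = 3 := by nlinarith [sq_nonneg (a - 3)]
    have hQk : Q = k := by rw [ha'] at heq; linarith
    have hSk : S = k := by rw [ha'] at hS; linarith
    have hzero : (∑ i, (b i - 1) ^ 2) = 0 := by rw [hsum2]; linarith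
    refine ⟨ha', fun i => ?_⟩
    have := (Finset.sum_eq_zero_iff_of_nonneg
      (fun i _ => sq_nonneg (b i - 1))).mp hzero i (Finset.mem_univ i)
    have : b i - 1 = 0 := by
      have := sq_eq_zero_iff.mp this
      exact this
    linarith
  · rintro ⟨ha', hb⟩
    have hQk : Q = k := by
      rw [hQdef]
      simp [hb]
    rw [ha', hQk]
    ring
end

section
/- Let a < 0 be an integer and b₁, …, b_k integers such that a + b₁ > 0 and (a−1)(a−2) ≥ Σᵢ bᵢ(bᵢ+1). Then b₁ = 1 − a and bᵢ(bᵢ+1) = 0 (i.e. bᵢ ∈ {−1, 0}) for every i ≥ 2; in particular the adjunction inequality is an equality. -/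
open Finset

/-- Arithmetic core of Lemma `a<0`: if `a < 0`, `a + b₁ > 0` and
`(a−1)(a−2) ≥ Σ bᵢ(bᵢ+1)`, then `b₁ = 1 − a`, every other `bᵢ ∈ {−1, 0}`, and
the adjunction inequality is an equality. -/
theorem negative_H_coefficient (k : ℕ) (hk : 1 ≤ k) (a : ℤ) (ha : a < 0)
    (b : Fin k → ℤ)
    (hpos : 0 < a + b ⟨0, hk⟩)
    (hadj : ∑ i, b i * (b i + 1) ≤ (a - 1) * (a - 2)) :
    b ⟨0, hk⟩ = 1 - a ∧
    (∀ i : Fin k, i ≠ ⟨0, hk⟩ → b i = -1 ∨ b i = 0) ∧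
    ∑ i, b i * (b i + 1) = (a - 1) * (a - 2) := by
  set i0 : Fin k := ⟨0, hk⟩ with hi0
  have hb1 : 1 - a ≤ b i0 := by omega
  have hnn : ∀ i : Fin k, 0 ≤ b i * (b i + 1) := by
    intro i
    rcases le_or_gt (b i) (-1) with h | h
    · nlinarith
    · nlinarith
  have hsplit : ∑ i, b i * (b i + 1)
      = b i0 * (b i0 + 1) + ∑ i ∈ univ.erase i0, b i * (b i + 1) :=
    (Finset.add_sum_erase univ (fun i => b i * (b i + 1)) (mem_univ i0)).symm
  have herase_nn : 0 ≤ ∑ i ∈ univ.erase i0, b i * (b i + 1) :=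
    Finset.sum_nonneg fun i _ => hnn i
  have hterm_ge : (a - 1) * (a - 2) ≤ b i0 * (b i0 + 1) := by nlinarith
  have hterm_eq : b i0 * (b i0 + 1) = (a - 1) * (a - 2) := by
    rw [hsplit] at hadj; linarith
  have herase0 : ∑ i ∈ univ.erase i0, b i * (b i + 1) = 0 := by
    rw [hsplit] at hadj; linarith
  refine ⟨?_, ?_, ?_⟩
  · nlinarith
  · intro i hi
    have hz : b i * (b i + 1) = 0 := by
      have := (Finset.sum_eq_zero_iff_of_nonneg (fun i _ => hnn i)).mp herase0 i
        (Finset.mem_erase.mpr ⟨hi, mem_univ i⟩)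
      exact this
    rcases mul_eq_zero.mp hz with h | h
    · right; exact h
    · left; omega
  · rw [hsplit, hterm_eq, herase0]; ring
end

section
/- Let a, b, c be integers with a ≤ 0, c ≤ 0, a + b > 0 and (a−1)(a−2) ≥ b(b+1) + c(c+1). Then b = 1 − a ≥ 1, c ∈ {−1, 0}, and a² − b² − c² < 0. Moreover, if (a', b', c') is another triple of integers satisfying the same hypotheses, then a·a' − b·b' − c·c' < 0. -/
lemma cp2_key (a b c : ℤ) (ha : a ≤ 0) (hc : c ≤ 0)
    (hab : 0 < a + b)
    (hadj : b * (b + 1) + c * (c + 1) ≤ (a - 1) * (a - 2)) :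
    b = 1 - a ∧ (c = -1 ∨ c = 0) := by
  have hcc : 0 ≤ c * (c + 1) := by
    rcases eq_or_lt_of_le hc with h | h
    · simp [h]
    · have : c + 1 ≤ 0 := by omega
      nlinarith [mul_pos_of_neg_of_neg h (show c+1 ≤ 0 from this)]
  have hb1 : 1 - a ≤ b := by linarith
  have hb : b = 1 - a := by nlinarith
  subst hb
  have hcz : c * (c + 1) = 0 := by nlinarith
  rcases mul_eq_zero.mp hcz with h | h
  · exact ⟨rfl, Or.inr h⟩
  · exact ⟨rfl, Or.inl (by linarith)⟩

/-- Arithmetic content of Lemma `A` for `ℂP²#2ℂ̄P²`: for integers `a ≤ 0`,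
`c ≤ 0` with `a + b > 0` and `(a−1)(a−2) ≥ b(b+1) + c(c+1)`, one has
`b = 1 − a ≥ 1`, `c ∈ {−1, 0}`, `a² − b² − c² < 0`, and any two such triples
pair negatively. -/
theorem cp2_two_blowup_A (a b c : ℤ) (ha : a ≤ 0) (hc : c ≤ 0)
    (hab : 0 < a + b)
    (hadj : b * (b + 1) + c * (c + 1) ≤ (a - 1) * (a - 2)) :
    b = 1 - a ∧ 1 ≤ b ∧ (c = -1 ∨ c = 0) ∧
    a ^ 2 - b ^ 2 - c ^ 2 < 0 ∧
    ∀ a' b' c' : ℤ, a' ≤ 0 → c' ≤ 0 → 0 < a' + b' →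
      b' * (b' + 1) + c' * (c' + 1) ≤ (a' - 1) * (a' - 2) →
      a * a' - b * b' - c * c' < 0 := by
  obtain ⟨hb, hc01⟩ := cp2_key a b c ha hc hab hadj
  refine ⟨hb, by omega, hc01, ?_, ?_⟩
  · rcases hc01 with h | h <;> subst h <;> nlinarith
  · intro a' b' c' ha' hc' hab' hadj'
    obtain ⟨hb', hc01'⟩ := cp2_key a' b' c' ha' hc' hab' hadj'
    rcases hc01 with h | h <;> rcases hc01' with h' | h' <;>
      subst h <;> subst h' <;> nlinarith
end

section
/- Let s ≥ 1 be an integer, c₀ ∈ {0, −1}, and set A = (1−s, s, c₀) ∈ ℝ³. Suppose real numbers v, w satisfy (1, v, w) = p·A + Σᵢ₌₁ⁿ qᵢ·Bᵢ in ℝ³, where p ≥ 0, each qᵢ > 0, and each Bᵢ = (αᵢ, βᵢ, γᵢ) ∈ ℤ³ either equals (0, 0, 1) or satisfies αᵢ ≥ 1, αᵢ + βᵢ ≥ 0 and αᵢ + γᵢ ≥ 0. Then v ≥ −1, and if v = −1 then w ≥ −1. -/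
open Finset

/-- Arithmetic content of Lemma `cca<0` for `ℂP²#2ℂ̄P²` (classes written
`(a, b, c)` for `aH + bE₁ + cE₂`): if `(1, v, w) = p·A + Σ qᵢ·Bᵢ` with
`A = (1−s, s, c₀)`, `s ≥ 1`, `c₀ ∈ {0, −1}`, `p ≥ 0`, `qᵢ > 0`, and each
integral triple `Bᵢ = (αᵢ, βᵢ, γᵢ)` equal to `(0,0,1)` or with `αᵢ ≥ 1`,
`αᵢ + βᵢ ≥ 0`, `αᵢ + γᵢ ≥ 0`, then `v ≥ −1`, and `v = −1` forces `w ≥ −1`. -/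
theorem cca_neg (s : ℤ) (hs : 1 ≤ s) (c₀ : ℤ) (hc₀ : c₀ = 0 ∨ c₀ = -1)
    (v w : ℝ) (m : ℕ) (p : ℝ) (hp : 0 ≤ p)
    (q : Fin m → ℝ) (hq : ∀ i, 0 < q i)
    (α β γ : Fin m → ℤ)
    (hB : ∀ i, (α i = 0 ∧ β i = 0 ∧ γ i = 1) ∨
      (1 ≤ α i ∧ 0 ≤ α i + β i ∧ 0 ≤ α i + γ i))
    (heq : ![(1 : ℝ), v, w] =
      p • ![1 - (s : ℝ), (s : ℝ), (c₀ : ℝ)] +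
        ∑ i, q i • ![(α i : ℝ), (β i : ℝ), (γ i : ℝ)]) :
    -1 ≤ v ∧ (v = -1 → -1 ≤ w) := by
  have h0 := congrFun heq 0
  have h1 := congrFun heq 1
  have h2 := congrFun heq 2
  simp only [Matrix.cons_val_zero, Matrix.cons_val_one, Matrix.head_cons,
    Matrix.cons_val_two, Matrix.tail_cons, Pi.add_apply, Pi.smul_apply,
    Finset.sum_apply, smul_eq_mul] at h0 h1 h2
  have hab : ∀ i ∈ Finset.univ, (0:ℝ) ≤ q i * ((α i : ℝ) + (β i : ℝ)) := by
    intro i _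
    rcases hB i with ⟨ha, hb, _⟩ | ⟨_, hab, _⟩
    · simp [ha, hb]
    · have : (0:ℝ) ≤ (α i : ℝ) + (β i : ℝ) := by exact_mod_cast hab
      exact mul_nonneg (hq i).le this
  have hag : ∀ i ∈ Finset.univ, (0:ℝ) ≤ q i * ((α i : ℝ) + (γ i : ℝ)) := by
    intro i _
    rcases hB i with ⟨ha, _, hg⟩ | ⟨_, _, hag⟩
    · have : (0:ℝ) ≤ (α i : ℝ) + (γ i : ℝ) := by
        rw [ha, hg]; norm_num
      exact mul_nonneg (hq i).le this
    · have : (0:ℝ) ≤ (α i : ℝ) + (γ i : ℝ) := by exact_mod_cast hag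
      exact mul_nonneg (hq i).le this
  have habsum : (0:ℝ) ≤ ∑ i, q i * ((α i : ℝ) + (β i : ℝ)) :=
    Finset.sum_nonneg hab
  have hagsum : (0:ℝ) ≤ ∑ i, q i * ((α i : ℝ) + (γ i : ℝ)) :=
    Finset.sum_nonneg hag
  have hsplit : ∑ i, q i * ((α i : ℝ) + (β i : ℝ)) =
      ∑ i, q i * (α i : ℝ) + ∑ i, q i * (β i : ℝ) := by
    rw [← Finset.sum_add_distrib]
    exact Finset.sum_congr rfl fun i _ => by ring
  have hsplit2 : ∑ i, q i * ((α i : ℝ) + (γ i : ℝ)) =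
      ∑ i, q i * (α i : ℝ) + ∑ i, q i * (γ i : ℝ) := by
    rw [← Finset.sum_add_distrib]
    exact Finset.sum_congr rfl fun i _ => by ring
  have hkey : 1 + v = p + ∑ i, q i * ((α i : ℝ) + (β i : ℝ)) := by
    rw [hsplit]; rw [h0, h1]; ring
  constructor
  · linarith
  · intro hv
    have hp0 : p = 0 := by
      rw [hv] at hkey; linarith
    rw [hp0] at h0 h2
    have : 1 + w = ∑ i, q i * ((α i : ℝ) + (γ i : ℝ)) := by
      rw [hsplit2, h0, h2]; ring
    linarith
end
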